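/- For a gamma-distributed random variable X with shape parameter α ∈ (0,1) and scale parameter 1/α (so that E[X] = 1), the mean residual time satisfies E[X − t | X ≥ t] ≤ 1/α for all t ≥ 0. -/

import Mathlib

open MeasureTheory ProbabilityTheory

/-- Tail integral of the exponential. -/
lemma exp_tail (α : ℝ) (hα0 : 0 < α) (u : ℝ) :
    ∫⁻ x in Set.Ioi u, ENNReal.ofReal (Real.exp (-(α * x))) =
      ENNReal.ofReal (Real.exp (-(α * u)) / α) := by
  have hint : IntegrableOn (fun x : ℝ => Real.exp (-(α * x))) (Set.Ioi u) := by
    simpa [neg_mul] using exp_neg_integrableOn_Ioi u hα0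
  have hval : ∫ x in Set.Ioi u, Real.exp (-(α * x)) = Real.exp (-(α * u)) / α := by
    have hderiv : ∀ x ∈ Set.Ici u,
        HasDerivAt (fun x : ℝ => -Real.exp (-(α * x)) / α) (Real.exp (-(α * x))) x := by
      intro x _
      have h1 : HasDerivAt (fun x : ℝ => -(α * x)) (-α) x := by
        simpa [Pi.neg_def] using ((hasDerivAt_id x).const_mul α).neg
      have h2 : HasDerivAt (fun x : ℝ => Real.exp (-(α * x))) (Real.exp (-(α * x)) * (-α)) x :=
        (Real.hasDerivAt_exp _).comp x h1
      have : HasDerivAt (fun x : ℝ => -Real.exp (-(α * x)) / α) (-(Real.exp (-(α * x)) * -α) / α) x :=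
        (h2.neg.div_const α)
      convert this using 1
      field_simp
    have htend : Filter.Tendsto (fun x : ℝ => -Real.exp (-(α * x)) / α) Filter.atTop (nhds 0) := by
      have : Filter.Tendsto (fun x : ℝ => Real.exp (-(α * x))) Filter.atTop (nhds 0) := by
        have hmul : Filter.Tendsto (fun x : ℝ => α * x) Filter.atTop Filter.atTop :=
          Filter.tendsto_id.const_mul_atTop hα0
        simpa using hmul
      simpa using (this.neg.div_const α)
    rw [integral_Ioi_of_hasDerivAt_of_tendsto' hderiv hint htend]; ring
  rw [← ofReal_integral_eq_lintegral_ofReal hint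
    (Filter.Eventually.of_forall fun x => (Real.exp_pos _).le), hval]

/-- Hazard rate of Gamma(α, rate α) with `α < 1` is at least `α`:
the tail mass is at most `(1/α)` times the density. -/
lemma gamma_tail_le (α : ℝ) (hα0 : 0 < α) (hα1 : α < 1) {u : ℝ} (hu : 0 < u) :
    gammaMeasure α α (Set.Ioi u) ≤ ENNReal.ofReal (1 / α) * gammaPDF α α u := by
  have hC : 0 ≤ α ^ α / Real.Gamma α :=
    (div_pos (Real.rpow_pos_of_pos hα0 α) (Real.Gamma_pos_of_pos hα0)).le
  have hCu : 0 ≤ α ^ α / Real.Gamma α * u ^ (α - 1) :=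
    mul_nonneg hC (Real.rpow_pos_of_pos hu _).le
  rw [gammaMeasure, withDensity_apply _ measurableSet_Ioi]
  have hmono : ∫⁻ x in Set.Ioi u, gammaPDF α α x ≤
      ∫⁻ x in Set.Ioi u, ENNReal.ofReal (α ^ α / Real.Gamma α * u ^ (α - 1)) *
        ENNReal.ofReal (Real.exp (-(α * x))) := by
    apply setLIntegral_mono (measurable_const.mul ((measurable_id.const_mul α).neg.exp.ennreal_ofReal))
    intro x hx
    simp only [id_eq, Pi.mul_apply, Pi.neg_apply]
    rw [gammaPDF_of_nonneg (le_of_lt (hu.trans hx)), ← ENNReal.ofReal_mul hCu]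
    apply ENNReal.ofReal_le_ofReal
    have hxu : x ^ (α - 1) ≤ u ^ (α - 1) :=
      Real.rpow_le_rpow_of_nonpos hu (le_of_lt hx) (by linarith)
    have := mul_le_mul_of_nonneg_right (mul_le_mul_of_nonneg_left hxu hC)
      (Real.exp_pos (-(α * x))).le
    linarith
  calc ∫⁻ x in Set.Ioi u, gammaPDF α α x ≤ _ := hmono
    _ = ENNReal.ofReal (α ^ α / Real.Gamma α * u ^ (α - 1)) *
        ∫⁻ x in Set.Ioi u, ENNReal.ofReal (Real.exp (-(α * x))) := by
      rw [lintegral_const_mul' _ _ ENNReal.ofReal_ne_top]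
    _ = ENNReal.ofReal (1 / α) * gammaPDF α α u := by
      rw [exp_tail α hα0 u, gammaPDF_of_nonneg hu.le,
        ← ENNReal.ofReal_mul hCu, ← ENNReal.ofReal_mul (by positivity)]
      congr 1
      field_simp

/-- For a Gamma(α, scale 1/α) random variable (rate α) with shape `α ∈ (0,1)`,
the mean residual time at every age `t ≥ 0` is at most `1/α`:
`E[(X − t)·1{X ≥ t}] ≤ (1/α)·P(X ≥ t)`. -/
theorem stmt_18 (α : ℝ) (hα0 : 0 < α) (hα1 : α < 1) :
    ∀ t : ℝ, 0 ≤ t →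
      (∫ x in Set.Ici t, (x - t) ∂(gammaMeasure α α)) ≤
        (1 / α) * ((gammaMeasure α α) (Set.Ici t)).toReal := by
  intro t ht
  have hprob : IsProbabilityMeasure (gammaMeasure α α) := isProbabilityMeasure_gammaMeasure hα0 hα0
  have hnn : 0 ≤ᵐ[(gammaMeasure α α).restrict (Set.Ici t)] fun x => x - t := by
    filter_upwards [ae_restrict_mem measurableSet_Ici] with x hx
    simpa [sub_nonneg] using hx
  have hmeas : AEStronglyMeasurable (fun x : ℝ => x - t)
      ((gammaMeasure α α).restrict (Set.Ici t)) :=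
    (continuous_id.sub continuous_const).aestronglyMeasurable
  rw [integral_eq_lintegral_of_nonneg_ae hnn hmeas]
  have key : (∫⁻ x, ENNReal.ofReal (x - t) ∂((gammaMeasure α α).restrict (Set.Ici t))) ≤
      ENNReal.ofReal (1 / α) * gammaMeasure α α (Set.Ici t) := by
    rw [lintegral_eq_lintegral_meas_lt _ hnn hmeas.aemeasurable]
    have hp : Measurable (gammaPDF α α) := (measurable_gammaPDFReal α α).ennreal_ofReal
    calc ∫⁻ s in Set.Ioi 0, ((gammaMeasure α α).restrict (Set.Ici t)) {a | s < a - t}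
        = ∫⁻ s in Set.Ioi 0, gammaMeasure α α (Set.Ioi (s + t)) := by
          apply setLIntegral_congr_fun measurableSet_Ioi
          intro s hs
          have hset : {a : ℝ | s < a - t} = Set.Ioi (s + t) := by
            ext a; simp [Set.mem_Ioi, lt_sub_iff_add_lt]
          beta_reduce
          rw [hset, Measure.restrict_apply measurableSet_Ioi,
            Set.inter_eq_self_of_subset_left (fun a ha => by
              simp only [Set.mem_Ioi] at ha
              exact Set.mem_Ici.mpr (by simp only [Set.mem_Ioi] at hs; linarith))]
      _ ≤ ∫⁻ s in Set.Ioi 0, ENNReal.ofReal (1 / α) * gammaPDF α α (s + t) := by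
          apply setLIntegral_mono (measurable_const.mul (hp.comp (measurable_add_const t)))
          intro s hs
          exact gamma_tail_le α hα0 hα1 (by simp only [Set.mem_Ioi] at hs; linarith)
      _ = ENNReal.ofReal (1 / α) * ∫⁻ s in Set.Ioi 0, gammaPDF α α (s + t) :=
          lintegral_const_mul' _ _ ENNReal.ofReal_ne_top
      _ = ENNReal.ofReal (1 / α) * gammaMeasure α α (Set.Ioi t) := by
          congr 1
          rw [gammaMeasure, withDensity_apply _ measurableSet_Ioi]
          have hmap : ∫⁻ u in Set.Ioi t, gammaPDF α α u =
              ∫⁻ u in Set.Ioi t, gammaPDF α α u ∂(Measure.map (· + t) volume) := by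
            rw [map_add_right_eq_self volume t]
          rw [hmap, setLIntegral_map measurableSet_Ioi hp (measurable_add_const t)]
          have : (· + t) ⁻¹' Set.Ioi t = Set.Ioi 0 := by
            ext s; simp [Set.mem_Ioi]
          rw [this]
      _ ≤ ENNReal.ofReal (1 / α) * gammaMeasure α α (Set.Ici t) :=
          mul_le_mul_right (measure_mono Set.Ioi_subset_Ici_self) _
  calc (∫⁻ x, ENNReal.ofReal (x - t) ∂((gammaMeasure α α).restrict (Set.Ici t))).toReal
      ≤ (ENNReal.ofReal (1 / α) * gammaMeasure α α (Set.Ici t)).toReal :=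
        ENNReal.toReal_mono (ENNReal.mul_ne_top ENNReal.ofReal_ne_top (measure_ne_top _ _)) key
    _ = (1 / α) * (gammaMeasure α α (Set.Ici t)).toReal := by
        rw [ENNReal.toReal_mul, ENNReal.toReal_ofReal (by positivity)]
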